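/- Let A be a finite-dimensional algebra over a field k, X an A-module, and Y a nonzero uniserial submodule of X with Loewy layers rad^{i-1}(Y)/rad^i(Y) ≅ S_i for i = 1,…,n, where each S_i is simple. Set X̄ = X/Y. Then for each j, the Loewy layer rad^{j-1}(X)/rad^j(X) is isomorphic either to rad^{j-1}(X̄)/rad^j(X̄) or to rad^{j-1}(X̄)/rad^j(X̄) ⊕ S_i for some i. -/

import Mathlib

universe u v

/-- The Jacobson radical of the ring `A`: the intersection of the maximal (left) ideals. -/
def jacIdeal (A : Type u) [Ring A] : Ideal A :=
  sInf {I : Ideal A | I.IsMaximal}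

/-- The powers `rad^i(M) = M · rad(A)^i` of the radical of a module. -/
def radPow (A : Type u) [Ring A] (M : Type v) [AddCommGroup M] [Module A M] :
    ℕ → Submodule A M
  | 0 => ⊤
  | n + 1 => Submodule.span A {x : M | ∃ a ∈ jacIdeal A, ∃ m ∈ radPow A M n, x = a • m}

/-- The `(j+1)`-st Loewy layer `rad^j(M)/rad^(j+1)(M)` of a module. -/
abbrev loewyLayer (A : Type u) [Ring A] (M : Type v) [AddCommGroup M] [Module A M] (j : ℕ) :=
  ↥(radPow A M j) ⧸ Submodule.comap (radPow A M j).subtype (radPow A M (j + 1))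

section Aux
variable {A : Type u} [Ring A] {M : Type v} {N : Type v}
  [AddCommGroup M] [Module A M] [AddCommGroup N] [Module A N]

lemma radPow_succ (j : ℕ) : radPow A M (j + 1) =
    Submodule.span A {x : M | ∃ a ∈ jacIdeal A, ∃ m ∈ radPow A M j, x = a • m} := rfl

lemma radPow_zero : radPow A M 0 = ⊤ := rfl

lemma smul_mem_radPow {a : A} (ha : a ∈ jacIdeal A) {j : ℕ} {v : M}
    (hv : v ∈ radPow A M j) : a • v ∈ radPow A M (j + 1) :=
  Submodule.subset_span ⟨a, ha, v, hv, rfl⟩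

lemma radPow_succ_le (j : ℕ) : radPow A M (j + 1) ≤ radPow A M j := by
  induction j with
  | zero => exact le_top
  | succ j ih =>
    rw [radPow_succ, Submodule.span_le]
    rintro x ⟨a, ha, m, hm, rfl⟩
    exact smul_mem_radPow ha (ih hm)

lemma radPow_le_of_le {i j : ℕ} (h : i ≤ j) : radPow A M j ≤ radPow A M i := by
  induction h with
  | refl => exact le_rfl
  | step h ih => exact (radPow_succ_le _).trans ih

lemma map_radPow_le (f : M →ₗ[A] N) (j : ℕ) :
    (radPow A M j).map f ≤ radPow A N j := by
  induction j with
  | zero => exact le_top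
  | succ j ih =>
    rw [radPow_succ, Submodule.map_span, Submodule.span_le]
    rintro x ⟨y, ⟨a, ha, m, hm, rfl⟩, rfl⟩
    rw [map_smul]
    exact smul_mem_radPow ha (ih ⟨m, hm, rfl⟩)

lemma map_radPow_of_surjective (f : M →ₗ[A] N) (hf : Function.Surjective f) (j : ℕ) :
    (radPow A M j).map f = radPow A N j := by
  refine le_antisymm (map_radPow_le f j) ?_
  induction j with
  | zero =>
    rw [radPow_zero, radPow_zero, Submodule.map_top, LinearMap.range_eq_top.2 hf]
  | succ j ih =>
    rw [radPow_succ, Submodule.span_le]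
    rintro x ⟨a, ha, m, hm, rfl⟩
    obtain ⟨m', hm', rfl⟩ := ih hm
    rw [← map_smul]
    exact Submodule.mem_map_of_mem (smul_mem_radPow ha hm')

end Aux

section Semisimple
variable {A : Type u} [Ring A]

lemma jacIdeal_eq_finset_inf [IsArtinian A A] :
    ∃ t : Finset (Ideal A), (∀ I ∈ t, I.IsMaximal) ∧ jacIdeal A = t.inf id := by
  classical
  have hne : {I : Submodule A A | ∃ t : Finset (Ideal A),
      (∀ J ∈ t, Ideal.IsMaximal J) ∧ I = t.inf id}.Nonempty :=
    ⟨⊤, ∅, by simp, by simp⟩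
  obtain ⟨I₀, ⟨t, ht, rfl⟩, hmin⟩ := IsArtinian.set_has_minimal _ hne
  refine ⟨t, ht, le_antisymm ?_ ?_⟩
  · exact Finset.le_inf fun J hJ => sInf_le (ht J hJ)
  · refine le_sInf fun J hJ => ?_
    by_contra hle
    have hlt : t.inf id ⊓ J < t.inf id := lt_of_le_of_ne inf_le_left
      (fun h => hle (le_trans h.symm.le inf_le_right))
    exact hmin (t.inf id ⊓ J) ⟨insert J t,
      fun K hK => by rcases Finset.mem_insert.1 hK with rfl | hK; exacts [hJ, ht K hK],
      by rw [Finset.inf_insert, inf_comm]; rfl⟩ hlt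

lemma isSemisimple_pi {ι : Type v} [Finite ι] (P : ι → Type v)
    [∀ i, AddCommGroup (P i)] [∀ i, Module A (P i)]
    (h : ∀ i, IsSemisimpleModule A (P i)) : IsSemisimpleModule A (∀ i, P i) := by
  classical
  cases nonempty_fintype ι
  refine isSemisimpleModule_of_isSemisimpleModule_submodule'
    (p := fun i => LinearMap.range (LinearMap.single A P i)) (fun i => ?_) ?_
  · exact (h i).congr (LinearEquiv.ofInjective _ (Pi.single_injective (M := P) i)).symm
  · simp_rw [LinearMap.range_eq_map, Submodule.iSup_map_single, Submodule.pi_top]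

lemma isSemisimple_quot_jacIdeal [IsArtinian A A] :
    IsSemisimpleModule A (A ⧸ jacIdeal A) := by
  classical
  obtain ⟨t, ht, hinf⟩ := jacIdeal_eq_finset_inf (A := A)
  let f : A →ₗ[A] (∀ I : {x // x ∈ t}, A ⧸ (I : Ideal A)) :=
    LinearMap.pi fun I => (I : Ideal A).mkQ
  have hker : jacIdeal A = LinearMap.ker f := by
    rw [LinearMap.ker_pi, hinf]
    simp only [Submodule.ker_mkQ]
    rw [Finset.inf_eq_iInf, iInf_subtype]
    rfl
  haveI hP : IsSemisimpleModule A (∀ I : {x // x ∈ t}, A ⧸ (I : Ideal A)) := by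
    refine isSemisimple_pi _ fun I => ?_
    haveI : IsSimpleModule A (A ⧸ (I : Ideal A)) :=
      isSimpleModule_iff_isCoatom.2 ((Ideal.isMaximal_def).1 (ht I I.2))
    infer_instance
  have e : (A ⧸ jacIdeal A) ≃ₗ[A] LinearMap.range f :=
    (Submodule.quotEquivOfEq (jacIdeal A) (LinearMap.ker f) hker).trans
      (LinearMap.quotKerEquivRange f)
  exact IsSemisimpleModule.congr (M := ↥(LinearMap.range f)) e

lemma isSemisimple_of_jacIdeal_smul [IsArtinian A A] {M : Type v} [AddCommGroup M] [Module A M]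
    (h : ∀ a ∈ jacIdeal A, ∀ x : M, a • x = 0) : IsSemisimpleModule A M := by
  haveI := isSemisimple_quot_jacIdeal (A := A)
  refine isSemisimpleModule_of_isSemisimpleModule_submodule'
    (p := fun x : M => Submodule.span A {x}) (fun x => ?_) ?_
  · have hle : jacIdeal A ≤ LinearMap.ker (LinearMap.toSpanSingleton A M x) :=
      fun a ha => by simpa using h a ha x
    let g : (A ⧸ jacIdeal A) →ₗ[A] M :=
      Submodule.liftQ _ (LinearMap.toSpanSingleton A M x) hle
    have hr : LinearMap.range g = Submodule.span A {x} := by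
      rw [Submodule.range_liftQ, LinearMap.span_singleton_eq_range]
    haveI := IsSemisimpleModule.range g
    exact IsSemisimpleModule.congr (LinearEquiv.ofEq _ _ hr).symm
  · rw [eq_top_iff]
    exact fun x _ => Submodule.mem_iSup_of_mem x (Submodule.mem_span_singleton_self x)

end Semisimple

section Layers
variable {A : Type u} [Ring A] {M : Type v} [AddCommGroup M] [Module A M]

lemma subquot_congr {P P' Q Q' : Submodule A M} (h1 : P = P') (h2 : Q = Q') :
    Nonempty ((↥P ⧸ Submodule.comap P.subtype Q) ≃ₗ[A] (↥P' ⧸ Submodule.comap P'.subtype Q')) := by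
  subst h1; subst h2; exact ⟨LinearEquiv.refl _ _⟩

lemma isSemisimple_loewyLayer [IsArtinian A A] (j : ℕ) :
    IsSemisimpleModule A (loewyLayer A M j) := by
  refine isSemisimple_of_jacIdeal_smul fun a ha x => ?_
  obtain ⟨y, rfl⟩ := Submodule.Quotient.mk_surjective _ x
  rw [← Submodule.Quotient.mk_smul, Submodule.Quotient.mk_eq_zero]
  exact (smul_mem_radPow ha y.2 : (a • (y : M)) ∈ _)

lemma squeeze {m : ℕ} (hsimp : IsSimpleModule A (loewyLayer A M m)) {N : Submodule A M}
    (h1 : radPow A M (m+1) ≤ N) (h2 : N ≤ radPow A M m) :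
    N = radPow A M m ∨ N = radPow A M (m+1) := by
  set P := radPow A M m with hP
  set K : Submodule A ↥P := Submodule.comap P.subtype (radPow A M (m+1)) with hK
  set N' : Submodule A ↥P := Submodule.comap P.subtype N with hN'
  have hKN : K ≤ N' := fun x hx => h1 hx
  rcases eq_bot_or_eq_top (Submodule.map K.mkQ N') with hQ | hQ
  · right
    refine le_antisymm (fun x hx => ?_) h1
    have hxP : x ∈ P := h2 hx
    have : K.mkQ ⟨x, hxP⟩ ∈ Submodule.map K.mkQ N' :=
      Submodule.mem_map_of_mem (by exact hx)
    rw [hQ, Submodule.mem_bot, Submodule.mkQ_apply, Submodule.Quotient.mk_eq_zero] at this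
    exact this
  · left
    refine le_antisymm h2 fun x hxP => ?_
    have hN't : N' = ⊤ := by
      have := (Submodule.map_mkQ_eq_top K N').1 hQ
      rwa [sup_eq_right.2 hKN] at this
    have : (⟨x, hxP⟩ : ↥P) ∈ N' := hN't ▸ Submodule.mem_top
    exact this

end Layers

section Step
variable {A : Type u} [Ring A] {X : Type v} [AddCommGroup X] [Module A X]

lemma quotient_layer_step [IsArtinian A A] (Y : Submodule A X) (j : ℕ) :
    (Submodule.comap Y.subtype (radPow A X (j+1)) = Submodule.comap Y.subtype (radPow A X j) →
      Nonempty (loewyLayer A X j ≃ₗ[A] loewyLayer A (X ⧸ Y) j)) ∧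
    Nonempty (loewyLayer A X j ≃ₗ[A]
      (loewyLayer A (X ⧸ Y) j ×
        (↥(Submodule.comap Y.subtype (radPow A X j)) ⧸
          Submodule.comap (Submodule.comap Y.subtype (radPow A X j)).subtype
            (Submodule.comap Y.subtype (radPow A X (j+1)))))) := by
  classical
  set Rj := radPow A X j with hRj
  set R1 := radPow A X (j+1) with hR1
  set C : Submodule A ↥Rj := Submodule.comap Rj.subtype R1 with hC
  set Wj : Submodule A ↥Y := Submodule.comap Y.subtype Rj with hWj
  set W1 : Submodule A ↥Y := Submodule.comap Y.subtype R1 with hW1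
  have hmapRZ : ∀ i, Submodule.map Y.mkQ (radPow A X i) = radPow A (X ⧸ Y) i := fun i =>
    map_radPow_of_surjective Y.mkQ (Submodule.mkQ_surjective Y) i
  set CZ : Submodule A ↥(radPow A (X ⧸ Y) j) :=
    Submodule.comap (radPow A (X ⧸ Y) j).subtype (radPow A (X ⧸ Y) (j+1)) with hCZ
  -- the map φ : Rj → loewyLayer (X⧸Y) j
  have hres : ∀ x ∈ Rj, Y.mkQ x ∈ radPow A (X ⧸ Y) j := fun x hx => by
    rw [← hmapRZ j]; exact Submodule.mem_map_of_mem hx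
  set φ₀ : ↥Rj →ₗ[A] ↥(radPow A (X ⧸ Y) j) := Y.mkQ.restrict hres with hφ₀
  set φ : ↥Rj →ₗ[A] loewyLayer A (X ⧸ Y) j := CZ.mkQ.comp φ₀ with hφ
  have hkerφ : ∀ x : ↥Rj, (φ x = 0 ↔ (x : X) ∈ Y ⊔ R1) := by
    intro x
    rw [hφ, LinearMap.comp_apply, Submodule.mkQ_apply, Submodule.Quotient.mk_eq_zero]
    have : (φ₀ x ∈ CZ) ↔ Y.mkQ (x : X) ∈ radPow A (X ⧸ Y) (j+1) := Iff.rfl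
    rw [this, ← hmapRZ (j+1), ← Submodule.comap_map_mkQ Y R1]
    exact Iff.rfl
  have hsurjφ : Function.Surjective φ := by
    intro z
    obtain ⟨w, rfl⟩ := Submodule.Quotient.mk_surjective CZ z
    have hw : (w : X ⧸ Y) ∈ Submodule.map Y.mkQ Rj := by rw [hmapRZ j]; exact w.2
    obtain ⟨v, hv, hvw⟩ := Submodule.mem_map.1 hw
    refine ⟨⟨v, hv⟩, ?_⟩
    rw [hφ, LinearMap.comp_apply, Submodule.mkQ_apply]
    congr 1
    exact Subtype.ext hvw
  have hCle : C ≤ LinearMap.ker φ := fun x hx => by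
    rw [LinearMap.mem_ker, hkerφ]
    exact Submodule.mem_sup_right hx
  set ψ : loewyLayer A X j →ₗ[A] loewyLayer A (X ⧸ Y) j := C.liftQ φ hCle with hψ
  have hψs : Function.Surjective ψ := by
    rw [← LinearMap.range_eq_top, hψ, Submodule.range_liftQ, LinearMap.range_eq_top]
    exact hsurjφ
  -- the map χ : Wj → loewyLayer X j
  set χ₀ : ↥Wj →ₗ[A] ↥Rj := Y.subtype.restrict (p := Wj) (q := Rj) (fun x hx => hx) with hχ₀
  set χ : ↥Wj →ₗ[A] loewyLayer A X j := C.mkQ.comp χ₀ with hχ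
  have hχapp : ∀ x : ↥Wj, χ x = C.mkQ (χ₀ x) := fun _ => rfl
  have hrange : LinearMap.range χ = LinearMap.ker ψ := by
    have hkerψ : LinearMap.ker ψ = Submodule.map C.mkQ (LinearMap.ker φ) :=
      Submodule.ker_liftQ C φ hCle
    apply le_antisymm
    · rintro _ ⟨x, rfl⟩
      rw [hkerψ, hχapp]
      refine Submodule.mem_map_of_mem ?_
      rw [LinearMap.mem_ker, hkerφ]
      exact Submodule.mem_sup_left x.1.2
    · intro z hz
      rw [hkerψ] at hz
      obtain ⟨x, hx, rfl⟩ := Submodule.mem_map.1 hz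
      rw [LinearMap.mem_ker, hkerφ] at hx
      obtain ⟨v, hvY, u, hu, huv⟩ := Submodule.mem_sup.1 hx
      have hvR : v ∈ Rj := by
        have hveq : v = (x : X) - u := by rw [← huv]; abel
        rw [hveq]
        exact Submodule.sub_mem _ x.2 (radPow_succ_le j hu)
      refine ⟨⟨⟨v, hvY⟩, hvR⟩, ?_⟩
      rw [hχapp, Submodule.mkQ_apply, Submodule.mkQ_apply, Submodule.Quotient.eq]
      have : ((χ₀ ⟨⟨v, hvY⟩, hvR⟩ : ↥Rj) : X) = v := rfl
      show χ₀ _ - x ∈ C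
      have hmem : ((χ₀ ⟨⟨v, hvY⟩, hvR⟩ - x : ↥Rj) : X) = v - (x : X) := rfl
      show ((χ₀ ⟨⟨v, hvY⟩, hvR⟩ - x : ↥Rj) : X) ∈ R1
      rw [hmem]
      have : v - (x : X) = -u := by rw [← huv]; abel
      rw [this]
      exact neg_mem hu
  have hkerχ : LinearMap.ker χ = Submodule.comap Wj.subtype W1 := by
    ext x
    rw [LinearMap.mem_ker, hχapp, Submodule.mkQ_apply, Submodule.Quotient.mk_eq_zero]
    exact Iff.rfl
  constructor
  · -- case A : W1 = Wj
    intro hWW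
    have hχ0 : χ = 0 := by
      ext x
      simp only [LinearMap.zero_apply]
      rw [hχapp, Submodule.mkQ_apply, Submodule.Quotient.mk_eq_zero]
      exact (hWW.ge x.2 : x.1 ∈ W1)
    have hker0 : LinearMap.ker ψ = ⊥ := by
      rw [← hrange, LinearMap.range_eq_bot.2 hχ0]
    exact ⟨LinearEquiv.ofBijective ψ ⟨LinearMap.ker_eq_bot.1 hker0, hψs⟩⟩
  · -- general splitting
    haveI : IsSemisimpleModule A (loewyLayer A X j) := isSemisimple_loewyLayer j
    obtain ⟨c, hc⟩ := exists_isCompl (LinearMap.ker ψ)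
    have e1 : loewyLayer A X j ≃ₗ[A] (↥(LinearMap.ker ψ) × ↥c) :=
      (Submodule.prodEquivOfIsCompl _ _ hc).symm
    have e2 : ↥c ≃ₗ[A] loewyLayer A (X ⧸ Y) j :=
      (Submodule.quotientEquivOfIsCompl _ c hc).symm.trans
        (ψ.quotKerEquivOfSurjective hψs)
    have e3 : ↥(LinearMap.ker ψ) ≃ₗ[A] (↥Wj ⧸ Submodule.comap Wj.subtype W1) :=
      ((LinearEquiv.ofEq _ _ hrange.symm).trans
        (χ.quotKerEquivRange).symm).trans (Submodule.quotEquivOfEq _ _ hkerχ)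
    exact ⟨(e1.trans (e3.prodCongr e2)).trans (LinearEquiv.prodComm A _ _)⟩

end Step


/-- Lemma 2.1(i): Let `Y` be a nonzero uniserial submodule of `X` with simple Loewy
layers `S 0, …, S (n-1)` (so `Y` has Loewy length `n`).  Then each Loewy layer of `X` is
isomorphic to the corresponding Loewy layer of `X/Y`, possibly with one extra summand
`S i`. -/
theorem loewy_layers_of_quotient_by_uniserial
    (k : Type u) (A : Type u) [Field k] [Ring A] [Algebra k A] [FiniteDimensional k A]
    (X : Type u) [AddCommGroup X] [Module A X] [Module.Finite A X]
    (Y : Submodule A X) (hY0 : Y ≠ ⊥)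
    (huniserial : ∀ N₁ N₂ : Submodule A ↥Y, N₁ ≤ N₂ ∨ N₂ ≤ N₁)
    (n : ℕ) (S : Fin n → Type u) [∀ i, AddCommGroup (S i)] [∀ i, Module A (S i)]
    (hsimple : ∀ i, IsSimpleModule A (S i))
    (hlayers : ∀ i : Fin n, Nonempty (loewyLayer A (↥Y) (i : ℕ) ≃ₗ[A] S i))
    (hlength : radPow A (↥Y) n = ⊥) :
    ∀ j : ℕ, Nonempty (loewyLayer A X j ≃ₗ[A] loewyLayer A (X ⧸ Y) j) ∨
      ∃ i : Fin n, Nonempty (loewyLayer A X j ≃ₗ[A] (loewyLayer A (X ⧸ Y) j × S i)) := by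
  haveI hAA : IsArtinian A A := isArtinian_of_tower k inferInstance
  intro j
  have hsimpLayer : ∀ m : ℕ, m < n → IsSimpleModule A (loewyLayer A (↥Y) m) := by
    intro m hmn
    haveI := hsimple ⟨m, hmn⟩
    obtain ⟨e⟩ := hlayers ⟨m, hmn⟩
    exact IsSimpleModule.congr e
  have hYW : ∀ (i m : ℕ), radPow A (↥Y) m ≤ Submodule.comap Y.subtype (radPow A X i) →
      radPow A (↥Y) (m+1) ≤ Submodule.comap Y.subtype (radPow A X (i+1)) := by
    intro i m h
    rw [radPow_succ, Submodule.span_le]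
    rintro x ⟨a, ha, y, hy, rfl⟩
    show Y.subtype (a • y) ∈ radPow A X (i+1)
    rw [map_smul]
    exact smul_mem_radPow ha (h hy)
  have hWeq : ∀ i : ℕ, ∃ m : ℕ, Submodule.comap Y.subtype (radPow A X i) = radPow A (↥Y) m := by
    intro i
    induction i with
    | zero =>
      exact ⟨0, by rw [show radPow A X 0 = ⊤ from rfl, Submodule.comap_top]; rfl⟩
    | succ i ih =>
      obtain ⟨m, hm⟩ := ih
      have h1 : radPow A (↥Y) (m+1) ≤ Submodule.comap Y.subtype (radPow A X (i+1)) :=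
        hYW i m hm.ge
      have h2 : Submodule.comap Y.subtype (radPow A X (i+1)) ≤ radPow A (↥Y) m :=
        le_trans (Submodule.comap_mono (radPow_succ_le i)) hm.le
      by_cases hmn : m < n
      · rcases squeeze (hsimpLayer m hmn) h1 h2 with h | h
        exacts [⟨m, h⟩, ⟨m+1, h⟩]
      · push_neg at hmn
        have hbot : radPow A (↥Y) m = ⊥ := le_bot_iff.1 (hlength ▸ radPow_le_of_le hmn)
        exact ⟨m, le_antisymm h2 (by rw [hbot]; exact bot_le)⟩
  obtain ⟨m, hm⟩ := hWeq j
  have step := quotient_layer_step Y j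
  by_cases hWW : Submodule.comap Y.subtype (radPow A X (j+1)) =
      Submodule.comap Y.subtype (radPow A X j)
  · exact Or.inl (step.1 hWW)
  · right
    have h1 : radPow A (↥Y) (m+1) ≤ Submodule.comap Y.subtype (radPow A X (j+1)) :=
      hYW j m hm.ge
    have h2 : Submodule.comap Y.subtype (radPow A X (j+1)) ≤ radPow A (↥Y) m :=
      le_trans (Submodule.comap_mono (radPow_succ_le j)) hm.le
    have hmn : m < n := by
      by_contra h
      push_neg at h
      have hbot : radPow A (↥Y) m = ⊥ := le_bot_iff.1 (hlength ▸ radPow_le_of_le h)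
      exact hWW (by rw [le_bot_iff.1 (h2.trans hbot.le), hm, hbot])
    have hW1 : Submodule.comap Y.subtype (radPow A X (j+1)) = radPow A (↥Y) (m+1) := by
      rcases squeeze (hsimpLayer m hmn) h1 h2 with h | h
      · exact absurd (h.trans hm.symm) hWW
      · exact h
    refine ⟨⟨m, hmn⟩, ?_⟩
    obtain ⟨e⟩ := step.2
    obtain ⟨e'⟩ := subquot_congr (A := A) hm hW1
    obtain ⟨e6⟩ := hlayers ⟨m, hmn⟩
    exact ⟨e.trans ((LinearEquiv.refl A (loewyLayer A (X ⧸ Y) j)).prodCongr (e'.trans e6))⟩
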